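/- Let f be an efficient, tops-only, onto rule on the universal domain. Then f is NOM if and only if either (i) there is at most one agent i with V_i ≠ ∅, and for that agent SV_i = V_i, or (ii) there is an alternative y such that for every agent i, SV_i = V_i ⊆ {y}. -/
import Mathlib


/-- A preference profile: each agent `i : Fin n` has a strict preference,
modeled as a linear order on the set of alternatives `X`. -/
abbrev Profile (n : ℕ) (X : Type*) := Fin n → LinearOrder X

/-- The top (best) alternative of a preference `L`. -/
noncomputable def top {X : Type*} [Fintype X] [Nonempty X] (L : LinearOrder X) : X :=
  @Finset.max' X L Finset.univ Finset.univ_nonempty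

/-- `x` is strictly preferred to `y` according to `L`. -/
def prefers {X : Type*} (L : LinearOrder X) (x y : X) : Prop := L.lt y x

/-- The option set left open by preference `L` of agent `i` at rule `f`. -/
def OptionSet {n : ℕ} {X : Type*} (f : Profile n X → X) (i : Fin n) (L : LinearOrder X) :
    Set X :=
  {x | ∃ P : Profile n X, P i = L ∧ f P = x}

/-- `Li'` is a profitable manipulation of `f` at (true preference) `Li` for agent `i`. -/
def IsManip {n : ℕ} {X : Type*} (f : Profile n X → X) (i : Fin n)
    (Li Li' : LinearOrder X) : Prop :=
  ∃ P : Profile n X, P i = Li ∧ prefers Li (f (Function.update P i Li')) (f P)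

/-- The worst element of `O(Li')` is strictly `Li`-preferred to the worst element of `O(Li)`.
For nonempty finite option sets this is equivalent to: some element of `O(Li)` is strictly
worse (w.r.t. `Li`) than every element of `O(Li')`. -/
def WorstImproves {n : ℕ} {X : Type*} (f : Profile n X → X) (i : Fin n)
    (Li Li' : LinearOrder X) : Prop :=
  ∃ w ∈ OptionSet f i Li, ∀ w' ∈ OptionSet f i Li', prefers Li w' w

/-- The best element of `O(Li')` is strictly `Li`-preferred to the best element of `O(Li)`.
For nonempty finite option sets this is equivalent to: some element of `O(Li')` is strictly
better (w.r.t. `Li`) than every element of `O(Li)`. -/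
def BestImproves {n : ℕ} {X : Type*} (f : Profile n X → X) (i : Fin n)
    (Li Li' : LinearOrder X) : Prop :=
  ∃ b' ∈ OptionSet f i Li', ∀ b ∈ OptionSet f i Li, prefers Li b' b

/-- `Li'` is an obvious manipulation of `f` at `Li` for agent `i`. -/
def IsObviousManip {n : ℕ} {X : Type*} (f : Profile n X → X) (i : Fin n)
    (Li Li' : LinearOrder X) : Prop :=
  IsManip f i Li Li' ∧ (WorstImproves f i Li Li' ∨ BestImproves f i Li Li')

/-- `f` is not obviously manipulable. -/
def NOM {n : ℕ} {X : Type*} (f : Profile n X → X) : Prop :=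
  ∀ (i : Fin n) (Li Li' : LinearOrder X), ¬ IsObviousManip f i Li Li'

/-- `f` is tops-only. -/
def TopsOnly {n : ℕ} {X : Type*} [Fintype X] [Nonempty X] (f : Profile n X → X) : Prop :=
  ∀ P P' : Profile n X, (∀ i, top (P i) = top (P' i)) → f P = f P'

/-- The set `V_i` of alternatives that agent `i` vetoes via some preference. -/
def VetoSet {n : ℕ} {X : Type*} (f : Profile n X → X) (i : Fin n) : Set X :=
  {x | ∃ L : LinearOrder X, x ∉ OptionSet f i L}

/-- The set `SV_i` of alternatives strongly vetoed by agent `i`: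
`x` is vetoed via `L` precisely when the top of `L` differs from `x`. -/
def StrongVetoSet {n : ℕ} {X : Type*} [Fintype X] [Nonempty X]
    (f : Profile n X → X) (i : Fin n) : Set X :=
  {x | ∀ L : LinearOrder X, x ∉ OptionSet f i L ↔ top L ≠ x}

/-- `f` is dictatorial: some agent's top alternative is always selected. -/
def Dictatorial {n : ℕ} {X : Type*} [Fintype X] [Nonempty X]
    (f : Profile n X → X) : Prop :=
  ∃ i : Fin n, ∀ P : Profile n X, f P = top (P i)

/-- `f` is efficient: it never selects a Pareto-dominated alternative. -/
def Efficient {n : ℕ} {X : Type*} (f : Profile n X → X) : Prop :=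
  ∀ P : Profile n X, ¬ ∃ x : X, ∀ i, prefers (P i) x (f P)

section Aux

variable {n : ℕ} {X : Type*} [Fintype X] [Nonempty X]

lemma le_top' (L : LinearOrder X) (a : X) : L.le a (top L) :=
  @Finset.le_max' X L Finset.univ a (Finset.mem_univ a)

lemma lt_top_of_ne' (L : LinearOrder X) {a : X} (h : a ≠ top L) : L.lt a (top L) :=
  @lt_of_le_of_ne X L.toPartialOrder a (top L) (le_top' L a) h

lemma not_lt_top' (L : LinearOrder X) (a : X) : ¬ L.lt (top L) a :=
  fun h => absurd (le_top' L a) (@not_le_of_gt X L.toPreorder _ _ h)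

noncomputable def mkOrder (r : X → ℕ) (hr : Function.Injective r) : LinearOrder X :=
  LinearOrder.lift' r hr

lemma mkOrder_lt (r : X → ℕ) (hr : Function.Injective r) (a b : X) :
    (mkOrder r hr).lt a b ↔ r a < r b := Iff.rfl

lemma mkOrder_top (r : X → ℕ) (hr : Function.Injective r) (t : X)
    (ht : ∀ z, z ≠ t → r z < r t) : top (mkOrder r hr) = t := by
  by_contra h
  exact not_lt_top' (mkOrder r hr) t ((mkOrder_lt r hr _ t).mpr (ht _ h))

noncomputable def rk (X : Type*) [Fintype X] : X → ℕ := fun z => (Fintype.equivFin X z : ℕ)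

lemma rk_lt (z : X) : rk X z < Fintype.card X := (Fintype.equivFin X z).isLt

lemma rk_inj : Function.Injective (rk X) := fun a b h => by
  have := Fin.val_injective h
  exact (Fintype.equivFin X).injective this

lemma exists_order_top (t : X) : ∃ L : LinearOrder X, top L = t := by
  classical
  set r : X → ℕ := fun z => if z = t then Fintype.card X else rk X z with hrdef
  have hr : Function.Injective r := by
    intro a b hab
    have ha := rk_lt a
    have hb := rk_lt b
    simp only [hrdef] at hab
    split_ifs at hab <;> first | omega | exact rk_inj (by omega) | simp_all
  refine ⟨mkOrder r hr, mkOrder_top r hr t ?_⟩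
  intro z hz
  have hza := rk_lt z
  simp only [hrdef]
  split_ifs <;> first | omega | simp_all

lemma exists_order_top_bot {t x : X} (h : t ≠ x) :
    ∃ L : LinearOrder X, top L = t ∧ ∀ z, z ≠ x → L.lt x z := by
  classical
  set r : X → ℕ := fun z => if z = x then 0 else if z = t then Fintype.card X + 1 else rk X z + 1
    with hrdef
  have hr : Function.Injective r := by
    intro a b hab
    have ha := rk_lt a
    have hb := rk_lt b
    simp only [hrdef] at hab
    split_ifs at hab <;> first | omega | exact rk_inj (by omega) | simp_all
  refine ⟨mkOrder r hr, mkOrder_top r hr t ?_, ?_⟩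
  · intro z hz
    have hza := rk_lt z
    simp only [hrdef]
    split_ifs <;> first | omega | simp_all
  · intro z hz
    rw [mkOrder_lt]
    have hza := rk_lt z
    simp only [hrdef]
    split_ifs <;> first | omega | simp_all

lemma exists_order_top_second {t s : X} (h : t ≠ s) :
    ∃ L : LinearOrder X, top L = t ∧ ∀ z, z ≠ t → z ≠ s → L.lt z s := by
  classical
  set r : X → ℕ := fun z => if z = t then Fintype.card X + 1 else if z = s then Fintype.card X
    else rk X z with hrdef
  have hr : Function.Injective r := by
    intro a b hab
    have ha := rk_lt a
    have hb := rk_lt b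
    simp only [hrdef] at hab
    split_ifs at hab <;> first | omega | exact rk_inj (by omega) | simp_all
  refine ⟨mkOrder r hr, mkOrder_top r hr t ?_, ?_⟩
  · intro z hz
    have hza := rk_lt z
    simp only [hrdef]
    split_ifs <;> first | omega | simp_all
  · intro z hz1 hz2
    rw [mkOrder_lt]
    have hza := rk_lt z
    simp only [hrdef]
    split_ifs <;> first | omega | simp_all

lemma mem_optionSet_self (f : Profile n X → X) (P : Profile n X) (i : Fin n) :
    f P ∈ OptionSet f i (P i) := ⟨P, rfl, rfl⟩

lemma optionSet_eq_of_top_eq (f : Profile n X → X) (htops : TopsOnly f) (i : Fin n)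
    {L L' : LinearOrder X} (h : top L = top L') : OptionSet f i L = OptionSet f i L' := by
  have key : ∀ (A B : LinearOrder X), top A = top B → OptionSet f i A ⊆ OptionSet f i B := by
    intro A B hAB x hx
    obtain ⟨P, hPi, rfl⟩ := hx
    refine ⟨Function.update P i B, Function.update_self .., ?_⟩
    apply htops
    intro j
    by_cases hj : j = i
    · subst hj; rw [Function.update_self, hPi, hAB]
    · rw [Function.update_of_ne hj]
  exact Set.Subset.antisymm (key L L' h) (key L' L h.symm)

lemma top_mem_optionSet (f : Profile n X → X) (heff : Efficient f) (i : Fin n)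
    (L : LinearOrder X) : top L ∈ OptionSet f i L := by
  refine ⟨fun _ => L, rfl, ?_⟩
  by_contra h
  exact heff (fun _ => L) ⟨top L, fun _ => lt_top_of_ne' L h⟩

lemma nom_iff_no_worst (f : Profile n X → X) (heff : Efficient f) :
    NOM f ↔ ∀ (i : Fin n) (Li Li' : LinearOrder X), ¬ WorstImproves f i Li Li' := by
  constructor
  · intro h i Li Li' hw
    obtain ⟨w, ⟨P, hPi, hfP⟩, hall⟩ := hw
    refine h i Li Li' ⟨⟨P, hPi, ?_⟩, Or.inl ⟨w, ⟨P, hPi, hfP⟩, hall⟩⟩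
    have hmem : f (Function.update P i Li') ∈ OptionSet f i Li' :=
      ⟨Function.update P i Li', Function.update_self .., rfl⟩
    have h2 := hall _ hmem
    rw [hfP]
    exact h2
  · rintro h i Li Li' ⟨hm, hor⟩
    rcases hor with hw | hb
    · exact h i Li Li' hw
    · obtain ⟨b', hb', hall⟩ := hb
      exact not_lt_top' Li b' (hall (top Li) (top_mem_optionSet f heff i Li))

lemma strong_subset (f : Profile n X → X) (hX : 2 ≤ Fintype.card X) (i : Fin n) :
    StrongVetoSet f i ⊆ VetoSet f i := by
  intro x hx
  obtain ⟨t, ht⟩ := Fintype.exists_ne_of_one_lt_card (by omega) x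
  obtain ⟨L, hL⟩ := exists_order_top t
  exact ⟨L, (hx L).mpr (by rw [hL]; exact ht)⟩

lemma nom_of_strong (f : Profile n X → X) (heff : Efficient f)
    (h : ∀ i, StrongVetoSet f i = VetoSet f i) : NOM f := by
  rw [nom_iff_no_worst f heff]
  rintro i Li Li' ⟨w, hw, hall⟩
  by_cases hv : w ∈ VetoSet f i
  · have hs : w ∈ StrongVetoSet f i := (h i).symm ▸ hv
    have htop : top Li = w := by
      by_contra hne
      exact ((hs Li).mpr hne) hw
    have h2 := hall (top Li') (top_mem_optionSet f heff i Li')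
    rw [← htop] at h2
    exact not_lt_top' Li _ h2
  · have hmem : w ∈ OptionSet f i Li' := by
      by_contra hno
      exact hv ⟨Li', hno⟩
    exact @lt_irrefl X Li.toPreorder w (hall w hmem)

lemma strong_eq_of_nom (f : Profile n X → X) (htops : TopsOnly f) (heff : Efficient f)
    (hX : 2 ≤ Fintype.card X) (hN : NOM f) (i : Fin n) :
    StrongVetoSet f i = VetoSet f i := by
  have hW := (nom_iff_no_worst f heff).mp hN
  refine Set.Subset.antisymm (strong_subset f hX i) ?_
  rintro x ⟨L₀, hL₀⟩ L
  constructor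
  · intro hno hteq
    exact hno (hteq ▸ top_mem_optionSet f heff i L)
  · intro hne
    by_contra hmem
    obtain ⟨Li, hLitop, hLibot⟩ := exists_order_top_bot hne
    have hmem' : x ∈ OptionSet f i Li := by
      rw [optionSet_eq_of_top_eq f htops i hLitop]
      exact hmem
    refine hW i Li L₀ ⟨x, hmem', ?_⟩
    intro w' hw'
    exact hLibot w' (fun e => hL₀ (e ▸ hw'))

lemma veto_eq_of_two (f : Profile n X → X) (htops : TopsOnly f) (heff : Efficient f)
    (hX : 2 ≤ Fintype.card X) (hN : NOM f) {i j : Fin n} (hij : i ≠ j)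
    {x z : X} (hx : x ∈ VetoSet f i) (hz : z ∈ VetoSet f j) : x = z := by
  by_contra hxz
  have hxi : x ∈ StrongVetoSet f i := (strong_eq_of_nom f htops heff hX hN i).symm ▸ hx
  have hzj : z ∈ StrongVetoSet f j := (strong_eq_of_nom f htops heff hX hN j).symm ▸ hz
  obtain ⟨Lzx, hztop, hsecond⟩ := exists_order_top_second (Ne.symm hxz)
  obtain ⟨Lx, hLxtop⟩ := exists_order_top x
  set P : Profile n X := fun k => if k = i then Lzx else Lx with hP
  have hPi : P i = Lzx := by simp [hP]
  have hPj : P j = Lx := by simp [hP, Ne.symm hij]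
  have hfx : f P ≠ x := by
    intro he
    have hmem : f P ∈ OptionSet f i (P i) := mem_optionSet_self f P i
    rw [hPi] at hmem
    exact (hxi Lzx).mpr (by rw [hztop]; exact Ne.symm hxz) (he ▸ hmem)
  have hfz : f P ≠ z := by
    intro he
    have hmem : f P ∈ OptionSet f j (P j) := mem_optionSet_self f P j
    rw [hPj] at hmem
    exact (hzj Lx).mpr (by rw [hLxtop]; exact hxz) (he ▸ hmem)
  refine heff P ⟨x, fun k => ?_⟩
  by_cases hk : k = i
  · subst hk
    rw [hPi]
    exact hsecond (f P) hfz hfx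
  · have : P k = Lx := by simp [hP, hk]
    rw [this]
    have hlt := lt_top_of_ne' Lx (show f P ≠ top Lx by rw [hLxtop]; exact hfx)
    rw [hLxtop] at hlt
    exact hlt

end Aux

/-- An efficient, onto, tops-only rule is NOM iff either (i) at most one agent has a
nonempty veto set and that agent's vetoes are all strong, or (ii) there is an
alternative `y` such that `SV_i = V_i ⊆ {y}` for every agent. -/
theorem efficient_NOM_characterization {n : ℕ} {X : Type*} [Fintype X] [Nonempty X]
    (hn : 2 ≤ n) (hX : 2 ≤ Fintype.card X)
    (f : Profile n X → X) (honto : Function.Surjective f) (htops : TopsOnly f)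
    (heff : Efficient f) :
    NOM f ↔
      ((∀ i j : Fin n, (VetoSet f i).Nonempty → (VetoSet f j).Nonempty → i = j) ∧
        ∀ i : Fin n, (VetoSet f i).Nonempty → StrongVetoSet f i = VetoSet f i) ∨
      (∃ y : X, ∀ i : Fin n,
        StrongVetoSet f i = VetoSet f i ∧ VetoSet f i ⊆ {y}) := by
  constructor
  · intro hN
    have hA := fun i => strong_eq_of_nom f htops heff hX hN i
    by_cases h : ∃ i j : Fin n, i ≠ j ∧ (VetoSet f i).Nonempty ∧ (VetoSet f j).Nonempty
    · obtain ⟨i, j, hij, ⟨x0, hx0⟩, ⟨z0, hz0⟩⟩ := h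
      refine Or.inr ⟨x0, fun k => ⟨hA k, ?_⟩⟩
      intro w hw
      rw [Set.mem_singleton_iff]
      by_cases hk : k = i
      · subst hk
        have h1 := veto_eq_of_two f htops heff hX hN hij hw hz0
        have h2 := veto_eq_of_two f htops heff hX hN hij hx0 hz0
        exact h1.trans h2.symm
      · exact veto_eq_of_two f htops heff hX hN hk hw hx0
    · refine Or.inl ⟨fun i j hi hj => ?_, fun i _ => hA i⟩
      by_contra hij
      exact h ⟨i, j, hij, hi, hj⟩
  · intro h
    apply nom_of_strong f heff
    intro i
    rcases h with ⟨_, h2⟩ | ⟨y, h2⟩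
    · by_cases hv : (VetoSet f i).Nonempty
      · exact h2 i hv
      · rw [Set.not_nonempty_iff_eq_empty] at hv
        rw [hv]
        exact Set.eq_empty_iff_forall_notMem.mpr
          (fun x hx => by have := strong_subset f hX i hx; rwa [hv] at this)
    · exact (h2 i).1
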